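/- Let G be a group, H a normal subgroup of G, and R a ring with a G-grading Γ. Consider the induced G/H-grading of R with components R_ḡ = ⊕_{h∈H} R_{gh}, and suppose its support is finite. Then R is nilpotent if and only if the component R_ē = ⊕_{h∈H} R_h is nilpotent. -/

import Mathlib

/-- Product `a * l₀ * l₁ * ⋯` of a nonempty list of ring elements. -/
def mulList {R : Type*} [Mul R] (a : R) (l : List R) : R := l.foldl (· * ·) a

/-- `pw a n` is `aⁿ` for `n ≥ 1` (junk value `0` at `n = 0`). -/
def pw {R : Type*} [Mul R] [Zero R] (a : R) : ℕ → R
  | 0 => 0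
  | 1 => a
  | n + 2 => pw a (n + 1) * a

/-- Product of `n` elements given by `f` (junk `0` when `n = 0`). -/
def finProd {R : Type*} [Mul R] [Zero R] : {n : ℕ} → (Fin n → R) → R
  | 0, _ => 0
  | n + 1, f => mulList (f 0) (List.ofFn fun i : Fin n => f i.succ)

/-- `R ^ n = 0`: every product of `n` elements of `R` vanishes. -/
def PowZero (R : Type*) [Mul R] [Zero R] (n : ℕ) : Prop :=
  ∀ (a : R) (l : List R), l.length + 1 = n → mulList a l = 0

/-- `T ^ n = 0` for a subset `T` of a ring. -/
def PowZeroOn {R : Type*} [Mul R] [Zero R] (T : Set R) (n : ℕ) : Prop :=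
  ∀ (a : R) (l : List R), a ∈ T → (∀ x ∈ l, x ∈ T) → l.length + 1 = n → mulList a l = 0

/-- `a` is nilpotent: `aⁿ = 0` for some `n ≥ 1`. -/
def IsNilE {R : Type*} [Mul R] [Zero R] (a : R) : Prop := ∃ n, 1 ≤ n ∧ pw a n = 0

/-- A nil ring: every element is nilpotent. -/
def IsNilRing (R : Type*) [Mul R] [Zero R] : Prop := ∀ a : R, IsNilE a

/-- An `S`-grading of the ring `R`: a direct sum decomposition into additive
subgroups with `R_g R_h ⊆ R_{gh}`. -/
structure IsGrading {S R : Type*} [Monoid S] [NonUnitalRing R] [DecidableEq S]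
    (A : S → AddSubgroup R) : Prop where
  mul_mem : ∀ {g h : S} {x y : R}, x ∈ A g → y ∈ A h → x * y ∈ A (g * h)
  isInternal : DirectSum.IsInternal A

/-- Grading by an additively written monoid. -/
structure IsAddGrading {S R : Type*} [AddMonoid S] [NonUnitalRing R] [DecidableEq S]
    (A : S → AddSubgroup R) : Prop where
  mul_mem : ∀ {g h : S} {x y : R}, x ∈ A g → y ∈ A h → x * y ∈ A (g + h)
  isInternal : DirectSum.IsInternal A

/-- The subset `T` of a ring is `f`-commutative: there are a semigroup `G` acting on it
from the left and a map `f` with `a*b = f(a,b)·(b*a)`. -/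
def IsFCommutativeOn {R : Type*} [Mul R] (T : Set R) : Prop :=
  ∃ (G : Type) (_ : Semigroup G) (act : G → R → R),
    (∀ l m : G, ∀ x : R, x ∈ T → act (l * m) x = act l (act m x)) ∧
    (∀ l : G, ∀ x : R, x ∈ T → act l x ∈ T) ∧
    (∀ l : G, ∀ x y : R, x ∈ T → y ∈ T → act l (x * y) = act l x * y) ∧
    ∃ f : R → R → G, ∀ a b : R, a ∈ T → b ∈ T → a * b = act (f a b) (b * a)

/-- The ring `R` is `f`-commutative. -/
def IsFCommutative (R : Type*) [Mul R] : Prop :=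
  ∃ (G : Type) (_ : Semigroup G) (act : G → R → R),
    (∀ l m : G, ∀ x : R, act (l * m) x = act l (act m x)) ∧
    (∀ l : G, ∀ x y : R, act l (x * y) = act l x * y) ∧
    ∃ f : R → R → G, ∀ a b : R, a * b = act (f a b) (b * a)

/-- The order of `g`: least `n ≥ 1` with `gⁿ = 1`, and `0` if no such `n` exists. -/
noncomputable def ordOf {S : Type*} [Monoid S] (g : S) : ℕ := sInf {n | 1 ≤ n ∧ g ^ n = 1}

section StmtAux

variable {R : Type*} [NonUnitalRing R]

theorem mulList_append' (a : R) (l₁ l₂ : List R) :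
    mulList a (l₁ ++ l₂) = mulList (mulList a l₁) l₂ :=
  List.foldl_append

theorem mulList_concat' (a x : R) (l : List R) :
    mulList a (l ++ [x]) = mulList a l * x := by
  rw [mulList_append']; rfl

theorem zero_mulList' (l : List R) : mulList (0 : R) l = 0 := by
  induction l with
  | nil => rfl
  | cons x xs ih => show mulList (0 * x) xs = 0; rw [zero_mul]; exact ih

theorem mulList_add' (a b : R) (l : List R) :
    mulList (a + b) l = mulList a l + mulList b l := by
  induction l generalizing a b with
  | nil => rfl
  | cons x xs ih =>
    show mulList ((a + b) * x) xs = mulList (a * x) xs + mulList (b * x) xs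
    rw [add_mul]; exact ih _ _

theorem mulList_neg' (a : R) (l : List R) : mulList (-a) l = -mulList a l := by
  induction l generalizing a with
  | nil => rfl
  | cons x xs ih =>
    show mulList (-a * x) xs = -mulList (a * x) xs
    rw [neg_mul]; exact ih _

theorem mulList_mid' (a z : R) (l₁ xs : List R) :
    mulList a (l₁ ++ z :: xs) = mulList (mulList a l₁ * z) xs := by
  rw [mulList_append']; rfl

/-- Product `r 0 * r 1 * ⋯ * r n`. -/
def PP {M : Type*} [Mul M] (r : ℕ → M) : ℕ → M
  | 0 => r 0
  | n + 1 => PP r n * r (n + 1)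

theorem PP_zero {M : Type*} [Mul M] (r : ℕ → M) : PP r 0 = r 0 := rfl

theorem PP_succ {M : Type*} [Mul M] (r : ℕ → M) (n : ℕ) :
    PP r (n + 1) = PP r n * r (n + 1) := rfl

theorem PP_congr' {M : Type*} [Mul M] {r r' : ℕ → M} :
    ∀ n, (∀ i ≤ n, r i = r' i) → PP r n = PP r' n
  | 0, h => h 0 le_rfl
  | n + 1, h => by
    rw [PP_succ, PP_succ, PP_congr' n (fun i hi => h i (le_trans hi (Nat.le_succ n))),
      h (n + 1) le_rfl]

theorem PP_segment {M : Type*} [Semigroup M] (r : ℕ → M) (i : ℕ) :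
    ∀ n, PP r (i + n + 1) = PP r i * PP (fun t => r (i + 1 + t)) n
  | 0 => rfl
  | n + 1 => by
    have e1 : i + (n + 1) + 1 = (i + n + 1) + 1 := by omega
    rw [e1, PP_succ, PP_segment r i n, PP_succ, mul_assoc]
    have e2 : i + n + 1 + 1 = i + 1 + (n + 1) := by omega
    rw [e2]

theorem PP_eq_zero' {r : ℕ → R} {j n : ℕ} (h : PP r j = 0) (hj : j ≤ n) : PP r n = 0 := by
  induction n, hj using Nat.le_induction with
  | base => exact h
  | succ n hn ih => rw [PP_succ, ih, zero_mul]

theorem PP_mem' {Q : Type*} [Monoid Q] (B : Q → AddSubgroup R)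
    (hmul : ∀ {q c : Q} {x y : R}, x ∈ B q → y ∈ B c → x * y ∈ B (q * c))
    {r : ℕ → R} {q : ℕ → Q} (hr : ∀ i, r i ∈ B (q i)) :
    ∀ n, PP r n ∈ B (PP q n)
  | 0 => hr 0
  | n + 1 => hmul (PP_mem' B hmul hr n) (hr (n + 1))

theorem mulList_range' (f : ℕ → R) : ∀ n,
    mulList (f 0) ((List.range n).map fun i => f (i + 1)) = PP f n
  | 0 => rfl
  | n + 1 => by
    rw [List.range_succ, List.map_append, List.map_singleton, mulList_concat',
      mulList_range' f n, PP_succ]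

/-- Index function of a nonempty list. -/
def rfn (a : R) (l : List R) : ℕ → R := fun i =>
  match i with
  | 0 => a
  | i + 1 => l.getD i 0

theorem mulList_eq_PP (a : R) (l : List R) : mulList a l = PP (rfn a l) l.length := by
  induction l using List.reverseRecOn with
  | nil => rfl
  | append_singleton l' x ih =>
    rw [mulList_concat', ih, List.length_append, List.length_singleton, PP_succ]
    congr 1
    · refine PP_congr' _ fun i hi => ?_
      cases i with
      | zero => rfl
      | succ i =>
        show l'.getD i 0 = (l' ++ [x]).getD i 0
        rw [List.getD_append l' [x] 0 i (by omega)]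
    · show x = (l' ++ [x]).getD l'.length 0
      rw [List.getD_append_right l' [x] 0 l'.length le_rfl, Nat.sub_self]
      rfl

theorem key_hom {Q : Type*} [Group Q] (B : Q → AddSubgroup R)
    (hmul : ∀ {q c : Q} {x y : R}, x ∈ B q → y ∈ B c → x * y ∈ B (q * c))
    (S : Finset Q) (hS : ∀ q, q ∉ S → B q = ⊥)
    (m : ℕ) (hm : 1 ≤ m)
    (hT : ∀ f : ℕ → R, (∀ i, f i ∈ B 1) → PP f (m - 1) = 0)
    (r : ℕ → R) (q : ℕ → Q) (hr : ∀ i, r i ∈ B (q i)) :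
    PP r (S.card * m) = 0 := by
  classical
  set N := S.card * m + 1 with hN
  by_cases hc : ∀ j : Fin N, PP q (j : ℕ) ∈ S
  case neg =>
    push_neg at hc
    obtain ⟨j, hj⟩ := hc
    have h0 : PP r (j : ℕ) = 0 := by
      have hmem := PP_mem' B hmul hr (j : ℕ)
      rw [hS _ hj] at hmem
      exact AddSubgroup.mem_bot.mp hmem
    exact PP_eq_zero' h0 (by have := j.isLt; omega)
  case pos =>
    obtain ⟨y, -, hy⟩ := Finset.exists_lt_card_fiber_of_mul_lt_card_of_maps_to
      (s := (Finset.univ : Finset (Fin N))) (f := fun j => PP q (j : ℕ)) (t := S) (n := m)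
      (fun j _ => hc j)
      (by rw [Finset.card_univ, Fintype.card_fin]; omega)
    obtain ⟨F, hFsub, hFcard⟩ := Finset.exists_subset_card_eq (Nat.succ_le_of_lt hy)
    set e := F.orderEmbOfFin hFcard with he
    have heF : ∀ t : Fin (m + 1), PP q ((e t : Fin N) : ℕ) = y := by
      intro t
      have h1 : e t ∈ F := Finset.orderEmbOfFin_mem F hFcard t
      have h2 := hFsub h1
      simpa using (Finset.mem_filter.mp h2).2
    set jj : ℕ → ℕ := fun t => if h : t < m + 1 then ((e ⟨t, h⟩ : Fin N) : ℕ) else 0 with hjj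
    have hjj_eq : ∀ t (h : t < m + 1), jj t = ((e ⟨t, h⟩ : Fin N) : ℕ) := fun t h => dif_pos h
    have hjlt : ∀ t, t + 1 < m + 1 → jj t < jj (t + 1) := by
      intro t h
      rw [hjj_eq t (by omega), hjj_eq (t + 1) h]
      exact e.strictMono (show (⟨t, by omega⟩ : Fin (m + 1)) < ⟨t + 1, h⟩ from by
        simp [Fin.lt_def])
    have hQy : ∀ t, t < m + 1 → PP q (jj t) = y := fun t h => by
      rw [hjj_eq t h]; exact heF ⟨t, h⟩
    set d : ℕ → ℕ := fun t => jj (t + 1) - jj t - 1 with hd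
    set SEG : ℕ → R := fun t => PP (fun u => r (jj t + 1 + u)) (d t) with hSEG
    have hsplit : ∀ t, t + 1 < m + 1 → jj (t + 1) = jj t + d t + 1 := by
      intro t h
      have := hjlt t h
      simp only [hd]
      omega
    have hSEGmem : ∀ t, t + 1 < m + 1 → SEG t ∈ B 1 := by
      intro t ht
      have hm1 : PP (fun u => r (jj t + 1 + u)) (d t) ∈
          B (PP (fun u => q (jj t + 1 + u)) (d t)) :=
        PP_mem' B hmul (fun u => hr _) _
      have hq1 : PP (fun u => q (jj t + 1 + u)) (d t) = 1 := by
        have h2 : PP q (jj (t + 1)) = PP q (jj t) * PP (fun u => q (jj t + 1 + u)) (d t) := by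
          rw [hsplit t ht]; exact PP_segment q (jj t) (d t)
        rw [hQy (t + 1) ht, hQy t (by omega)] at h2
        have h3 : y * PP (fun u => q (jj t + 1 + u)) (d t) = y * 1 := by
          rw [mul_one]; exact h2.symm
        exact mul_left_cancel h3
      rw [hSEG]
      simpa [hq1] using hm1
    have hchain : ∀ t, 1 ≤ t → t < m + 1 → PP r (jj t) = PP r (jj 0) * PP SEG (t - 1) := by
      intro t h1
      induction t, h1 using Nat.le_induction with
      | base =>
        intro h2
        rw [hsplit 0 h2, PP_segment]
        rfl
      | succ t ht ih =>
        intro h2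
        have ih' := ih (by omega)
        rw [hsplit t h2, PP_segment, ih', mul_assoc]
        congr 1
        rw [show t + 1 - 1 = (t - 1) + 1 from by omega, PP_succ]
        congr 1
        rw [show t - 1 + 1 = t from by omega]
    have hf : PP (fun t => SEG (min t (m - 1))) (m - 1) = 0 :=
      hT _ (fun i => hSEGmem _ (by omega))
    have hcg : PP SEG (m - 1) = PP (fun t => SEG (min t (m - 1))) (m - 1) :=
      PP_congr' _ (fun i hi => by rw [min_eq_left hi])
    have h0 : PP r (jj m) = 0 := by
      rw [hchain m hm (by omega), hcg, hf, mul_zero]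
    have hlt : jj m < N := by
      rw [hjj_eq m (by omega)]
      exact (e ⟨m, by omega⟩).isLt
    exact PP_eq_zero' h0 (by omega)

theorem key_list {Q : Type*} [Group Q] (B : Q → AddSubgroup R)
    (hmul : ∀ {q c : Q} {x y : R}, x ∈ B q → y ∈ B c → x * y ∈ B (q * c))
    (S : Finset Q) (hS : ∀ q, q ∉ S → B q = ⊥)
    (m : ℕ) (hm : 1 ≤ m)
    (hT : ∀ f : ℕ → R, (∀ i, f i ∈ B 1) → PP f (m - 1) = 0)
    (a : R) (l : List R)
    (ha : ∃ c, a ∈ B c) (hl : ∀ x ∈ l, ∃ c, x ∈ B c)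
    (hlen : l.length = S.card * m) :
    mulList a l = 0 := by
  classical
  have hHom : ∀ i, ∃ c, rfn a l i ∈ B c := by
    intro i
    cases i with
    | zero => exact ha
    | succ i =>
      by_cases h : i < l.length
      · show ∃ c, l.getD i 0 ∈ B c
        rw [List.getD_eq_getElem l 0 h]
        exact hl _ (List.getElem_mem h)
      · show ∃ c, l.getD i 0 ∈ B c
        rw [List.getD_eq_default l 0 (by omega)]
        exact ⟨1, zero_mem _⟩
  choose q hq using hHom
  rw [mulList_eq_PP, hlen]
  exact key_hom B hmul S hS m hm hT (rfn a l) q hq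

theorem expand' (U : Set R) (hU : AddSubgroup.closure U = ⊤) (n : ℕ)
    (hkey : ∀ (a : R) (l : List R), a ∈ U → (∀ x ∈ l, x ∈ U) → l.length = n →
      mulList a l = 0) :
    ∀ (a : R) (l : List R), l.length = n → mulList a l = 0 := by
  have main : ∀ (l₂ l₁ : List R) (a : R), a ∈ U → (∀ x ∈ l₁, x ∈ U) →
      (l₁ ++ l₂).length = n → mulList a (l₁ ++ l₂) = 0 := by
    intro l₂
    induction l₂ with
    | nil =>
      intro l₁ a ha h1 hlen
      rw [List.append_nil]
      exact hkey a l₁ ha h1 (by simpa using hlen)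
    | cons x xs ih =>
      intro l₁ a ha h1 hlen
      have hx : x ∈ AddSubgroup.closure U := by rw [hU]; exact AddSubgroup.mem_top x
      refine AddSubgroup.closure_induction
        (p := fun z _ => mulList a (l₁ ++ z :: xs) = 0) ?_ ?_ ?_ ?_ hx
      · intro z hz
        show mulList a (l₁ ++ z :: xs) = 0
        rw [show l₁ ++ z :: xs = (l₁ ++ [z]) ++ xs from by simp]
        refine ih (l₁ ++ [z]) a ha ?_ ?_
        · intro w hw
          rcases List.mem_append.mp hw with h | h
          · exact h1 w h
          · rw [List.mem_singleton.mp h]; exact hz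
        · simp at hlen ⊢
          omega
      · show mulList a (l₁ ++ (0 : R) :: xs) = 0
        rw [mulList_mid', mul_zero]
        exact zero_mulList' xs
      · intro z w _ _ pz pw
        show mulList a (l₁ ++ (z + w) :: xs) = 0
        have pz' : mulList a (l₁ ++ z :: xs) = 0 := pz
        have pw' : mulList a (l₁ ++ w :: xs) = 0 := pw
        rw [mulList_mid', mul_add, mulList_add', ← mulList_mid', ← mulList_mid', pz', pw',
          add_zero]
      · intro z _ pz
        show mulList a (l₁ ++ (-z) :: xs) = 0
        have pz' : mulList a (l₁ ++ z :: xs) = 0 := pz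
        rw [mulList_mid', mul_neg, mulList_neg', ← mulList_mid', pz', neg_zero]
  intro a l hlen
  have ha : a ∈ AddSubgroup.closure U := by rw [hU]; exact AddSubgroup.mem_top a
  refine AddSubgroup.closure_induction (p := fun z _ => mulList z l = 0) ?_ ?_ ?_ ?_ ha
  · intro z hz
    show mulList z l = 0
    have := main l [] z hz (by simp) (by simpa using hlen)
    simpa using this
  · show mulList (0 : R) l = 0
    exact zero_mulList' l
  · intro z w _ _ pz pw
    show mulList (z + w) l = 0
    have pz' : mulList z l = 0 := pz
    have pw' : mulList w l = 0 := pw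
    rw [mulList_add', pz', pw', add_zero]
  · intro z _ pz
    show mulList (-z) l = 0
    have pz' : mulList z l = 0 := pz
    rw [mulList_neg', pz', neg_zero]

theorem main_aux {Q : Type*} [Group Q] (B : Q → AddSubgroup R)
    (hmul : ∀ {q c : Q} {x y : R}, x ∈ B q → y ∈ B c → x * y ∈ B (q * c))
    (hfin : {q : Q | B q ≠ ⊥}.Finite)
    (hUclos : AddSubgroup.closure {x : R | ∃ q, x ∈ B q} = ⊤)
    (m : ℕ) (hm : 1 ≤ m)
    (hPZ : PowZeroOn ((B 1 : AddSubgroup R) : Set R) m) :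
    ∃ n, 1 ≤ n ∧ PowZero R n := by
  classical
  set S := hfin.toFinset with hSdef
  have hS : ∀ q, q ∉ S → B q = ⊥ := by
    intro q hq
    by_contra h
    exact hq (hfin.mem_toFinset.mpr h)
  have hT : ∀ f : ℕ → R, (∀ i, f i ∈ B 1) → PP f (m - 1) = 0 := by
    intro f hf
    rw [← mulList_range' f (m - 1)]
    refine hPZ (f 0) _ (hf 0) ?_ ?_
    · intro x hx
      simp only [List.mem_map, List.mem_range] at hx
      obtain ⟨i, -, rfl⟩ := hx
      exact hf (i + 1)
    · simp only [List.length_map, List.length_range]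
      omega
  refine ⟨S.card * m + 1, by omega, ?_⟩
  intro a l hlen
  refine expand' {x : R | ∃ q, x ∈ B q} hUclos (S.card * m) ?_ a l (by omega)
  intro a' l' ha' hl' hlen'
  exact key_list B hmul S hS m hm hT a' l' ha' hl' hlen'

end StmtAux


theorem stmt_10 {G R : Type*} [Group G] [DecidableEq G] [NonUnitalRing R]
    (A : G → AddSubgroup R) (hA : IsGrading A)
    (H : Subgroup G) [H.Normal]
    (hfin : {q : G ⧸ H | (⨆ (g : G) (_ : ((g : G ⧸ H)) = q), A g) ≠ ⊥}.Finite) :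
    (∃ n, 1 ≤ n ∧ PowZero R n) ↔
      ∃ n, 1 ≤ n ∧ PowZeroOn ((⨆ h ∈ H, A h : AddSubgroup R) : Set R) n := by
  classical
  constructor
  · rintro ⟨n, hn, h⟩
    exact ⟨n, hn, fun a l _ _ hlen => h a l hlen⟩
  · rintro ⟨m, hm, hPZ⟩
    set B : G ⧸ H → AddSubgroup R :=
      fun q => ⨆ (g : G) (_ : ((g : G ⧸ H)) = q), A g with hB
    have hAB : ∀ g : G, A g ≤ B (g : G ⧸ H) := fun g =>
      le_iSup₂ (f := fun (g' : G) (_ : ((g' : G ⧸ H)) = (g : G ⧸ H)) => A g') g rfl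
    have hmul : ∀ {q c : G ⧸ H} {x y : R}, x ∈ B q → y ∈ B c → x * y ∈ B (q * c) := by
      intro q c x y hx hy
      have step1 : ∀ (h : G), ((h : G ⧸ H) = c) → ∀ y' ∈ A h, x * y' ∈ B (q * c) := by
        intro h hh y' hy'
        have hle : B q ≤ (B (q * c)).comap (AddMonoidHom.mulRight y') := by
          refine iSup_le fun g => iSup_le fun hg => ?_
          intro x' hx'
          simp only [AddSubgroup.mem_comap, AddMonoidHom.coe_mulRight]
          have hgh : ((g * h : G) : G ⧸ H) = q * c := by
            rw [QuotientGroup.mk_mul, hg, hh]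
          exact (hgh ▸ hAB (g * h)) (hA.mul_mem hx' hy')
        simpa using hle hx
      have hle : B c ≤ (B (q * c)).comap (AddMonoidHom.mulLeft x) := by
        refine iSup_le fun h => iSup_le fun hh => ?_
        intro y' hy'
        simpa using step1 h hh y' hy'
      simpa using hle hy
    have hTop : (⨆ g, A g : AddSubgroup R) = ⊤ := by
      rw [eq_top_iff]
      intro a _
      obtain ⟨x, rfl⟩ := hA.isInternal.surjective a
      refine DirectSum.induction_on x ?_ ?_ ?_
      · rw [map_zero]; exact zero_mem _
      · intro g v
        rw [DirectSum.coeAddMonoidHom_of]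
        exact le_iSup A g v.2
      · intro u v hu hv
        rw [map_add]; exact add_mem hu hv
    have hUclos : AddSubgroup.closure {x : R | ∃ q, x ∈ B q} = ⊤ := by
      rw [eq_top_iff, ← hTop]
      refine iSup_le fun g => le_trans (hAB g) ?_
      intro x hx
      exact AddSubgroup.subset_closure ⟨_, hx⟩
    have hT1 : ((⨆ h ∈ H, A h : AddSubgroup R)) = B 1 := by
      apply le_antisymm
      · refine iSup_le fun g => iSup_le fun hg =>
          le_iSup₂ (f := fun (g' : G) (_ : ((g' : G ⧸ H)) = 1) => A g') g
            ((QuotientGroup.eq_one_iff g).mpr hg)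
      · refine iSup_le fun g => iSup_le fun hg =>
          le_iSup₂ (f := fun (g' : G) (_ : g' ∈ H) => A g') g
            ((QuotientGroup.eq_one_iff g).mp hg)
    exact main_aux B hmul hfin hUclos m hm (hT1 ▸ hPZ)
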